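/- Let (x_n) be a sequence of positive real numbers with x_n → ∞ and (b_n) a sequence of real numbers with b_n/x_n → 0 as n → ∞. Then there exist a constant C > 0 and N such that for all n ≥ N there is a complex number r_n with |r_n| ≤ C · (|b_n| + b_n²)/x_n² and Γ(x_n + i b_n)/Γ(x_n) = exp( (x_n + i b_n) Log(x_n + i b_n) − x_n log x_n − i b_n − i b_n/(2 x_n) + r_n ), where Γ is the complex gamma function and Log denotes the principal branch of the complex logarithm. -/

import Mathlib

open Filter Topology Complex

noncomputable section
namespace GammaShiftAux

def hfun (w : ℂ) : ℂ := (w - 1/2) * Complex.log w - w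
def cfun (w : ℂ) : ℂ := (w + 1/2) * (Complex.log (w+1) - Complex.log w) - 1

lemma tel (y : ℂ) : hfun (y+1) - hfun y = cfun y + Complex.log y := by
  unfold hfun cfun; ring

lemma logTaylor3 (v : ℂ) : Complex.logTaylor 3 v = v - v^2/2 := by
  simp [Complex.logTaylor_succ, Complex.logTaylor_zero]
  ring

lemma re_pos_ne_zero {w : ℂ} (hw : 0 < w.re) : w ≠ 0 := by
  intro h; rw [h] at hw; simp at hw

lemma mem_slit {w : ℂ} (hw : 0 < w.re) : w ∈ Complex.slitPlane := Or.inl hw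

lemma norm_ge_re {w : ℂ} : w.re ≤ ‖w‖ := Complex.re_le_norm w

lemma log_one_add_inv {w : ℂ} (hw : 0 < w.re) :
    Complex.log (1 + 1/w) = Complex.log (w+1) - Complex.log w := by
  have hw0 : w ≠ 0 := re_pos_ne_zero hw
  have hre : 0 < (1 + 1/w).re := by
    have : (1/w).re = w.re / Complex.normSq w := by
      rw [one_div, Complex.inv_re]
    have hn : 0 < Complex.normSq w := Complex.normSq_pos.2 hw0
    simp only [Complex.add_re, Complex.one_re, this]
    positivity
  have h0 : 1 + 1/w ≠ 0 := re_pos_ne_zero hre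
  have key : Complex.log (w * (1 + 1/w)) = Complex.log w + Complex.log (1 + 1/w) := by
    rw [Complex.log_mul_eq_add_log_iff hw0 h0]
    have h1 : |Complex.arg w| < Real.pi / 2 := Complex.abs_arg_lt_pi_div_two_iff.2 (Or.inl hw)
    have h2 : |Complex.arg (1 + 1/w)| < Real.pi / 2 :=
      Complex.abs_arg_lt_pi_div_two_iff.2 (Or.inl hre)
    constructor
    · nlinarith [abs_lt.1 h1, abs_lt.1 h2]
    · nlinarith [abs_lt.1 h1, abs_lt.1 h2]
  have h2 : w * (1 + 1/w) = w + 1 := by field_simp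
  rw [h2] at key
  rw [key]; ring

end GammaShiftAux

namespace GammaShiftAux

def cderiv (w : ℂ) : ℂ := (Complex.log (w+1) - Complex.log w) + (w + 1/2) * (1/(w+1) - 1/w)

lemma hasDerivAt_cfun {w : ℂ} (hw : 0 < w.re) : HasDerivAt cfun (cderiv w) w := by
  have hw0 : w ≠ 0 := re_pos_ne_zero hw
  have hw1re : 0 < (w+1).re := by simp [Complex.add_re]; linarith
  have h1 : HasDerivAt (fun y : ℂ => Complex.log (y+1)) (w+1)⁻¹ w := by
    have := (Complex.hasDerivAt_log (mem_slit hw1re)).comp w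
      ((hasDerivAt_id w).add_const 1)
    simpa [Function.comp_def] using this
  have h2 : HasDerivAt Complex.log w⁻¹ w := Complex.hasDerivAt_log (mem_slit hw)
  have h3 : HasDerivAt (fun y : ℂ => y + 1/2) 1 w := (hasDerivAt_id w).add_const _
  have h4 := h3.mul (h1.sub h2)
  have h5 : HasDerivAt (fun y : ℂ => (y + 1/2) * (Complex.log (y+1) - Complex.log y) - 1)
      (1 * (Complex.log (w+1) - Complex.log w) + (w + 1/2) * ((w+1)⁻¹ - w⁻¹)) w :=
    h4.sub_const 1
  have : cfun = fun y : ℂ => (y + 1/2) * (Complex.log (y+1) - Complex.log y) - 1 := rfl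
  rw [this]
  convert h5 using 1
  unfold cderiv
  field_simp

lemma norm_add_one_ge {w : ℂ} (hw : 0 < w.re) : ‖w‖ ≤ ‖w+1‖ := by
  have h1 : Complex.normSq w ≤ Complex.normSq (w+1) := by
    simp only [Complex.normSq_apply, Complex.add_re, Complex.add_im, Complex.one_re,
      Complex.one_im]
    nlinarith
  have := Real.sqrt_le_sqrt h1
  simpa [Complex.norm_def] using this

lemma cderiv_bound {w : ℂ} (hw : 2 ≤ w.re) : ‖cderiv w‖ ≤ 2 / w.re ^ 3 := by
  have hw' : 0 < w.re := by linarith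
  have hw0 : w ≠ 0 := re_pos_ne_zero hw'
  have hw1re : 0 < (w+1).re := by simp [Complex.add_re]; linarith
  have hw1 : w + 1 ≠ 0 := re_pos_ne_zero hw1re
  have hnw : (2:ℝ) ≤ ‖w‖ := le_trans hw norm_ge_re
  have hnwpos : (0:ℝ) < ‖w‖ := by linarith
  set v : ℂ := 1/w with hv
  have hnv : ‖v‖ ≤ 1/2 := by
    rw [hv, norm_div, norm_one, div_le_div_iff₀ hnwpos (by norm_num)]
    linarith
  have hnv1 : ‖v‖ < 1 := lt_of_le_of_lt hnv (by norm_num)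
  -- decompose
  have hdecomp : cderiv w = (Complex.log (1+v) - Complex.logTaylor 3 v)
      + (-(1 / (2 * w^2 * (w+1)))) := by
    unfold cderiv
    rw [logTaylor3, hv, ← log_one_add_inv hw']
    have key : (w + 1/2) * (1/(w+1) - 1/w) + (1/w - (1/w)^2/2) + 1/(2*w^2*(w+1)) = 0 := by
      have e1 : 1/(w+1) - 1/w = -(1/(w*(w+1))) := by
        rw [div_sub_div _ _ hw1 hw0, show (1*w - (w+1)*1) = -1 from by ring,
          show (w+1)*w = w*(w+1) from by ring, neg_div]
      rw [e1]
      have hfact : w ^ 4 * 4 + w ^ 5 * 4 ≠ 0 := by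
        have h : w ^ 4 * 4 + w ^ 5 * 4 = 4 * w^4 * (w+1) := by ring
        rw [h]
        exact mul_ne_zero (mul_ne_zero (by norm_num) (pow_ne_zero 4 hw0)) hw1
      field_simp
      ring
    linear_combination key
  rw [hdecomp]
  have b1 : ‖Complex.log (1+v) - Complex.logTaylor 3 v‖ ≤ (2/3) * ‖v‖^3 := by
    have h0 := Complex.norm_log_sub_logTaylor_le 2 hnv1
    norm_num at h0
    have h13 : (1 - ‖v‖)⁻¹ ≤ 2 := by
      rw [inv_le_iff_one_le_mul₀ (by linarith)]
      linarith
    calc ‖Complex.log (1+v) - Complex.logTaylor 3 v‖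
        ≤ ‖v‖ ^ 3 * (1 - ‖v‖)⁻¹ / 3 := h0
      _ ≤ ‖v‖ ^ 3 * 2 / 3 := by gcongr
      _ = (2/3) * ‖v‖^3 := by ring
  have hvval : ‖v‖ = 1/‖w‖ := by rw [hv, norm_div, norm_one]
  have b2 : ‖-(1 / (2 * w^2 * (w+1)))‖ ≤ 1/2 * (1/‖w‖^3) := by
    rw [norm_neg, norm_div, norm_one, norm_mul, norm_mul, norm_pow]
    have h1 : ‖w‖ ≤ ‖w+1‖ := norm_add_one_ge hw'
    have : ‖(2:ℂ)‖ = 2 := by norm_num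
    rw [this]
    calc 1/(2*‖w‖^2*‖w+1‖) ≤ 1/(2*‖w‖^3) := by
          apply one_div_le_one_div_of_le (by positivity)
          have h2 : (2:ℝ)*‖w‖^3 = 2*‖w‖^2*‖w‖ := by ring
          rw [h2]
          gcongr
      _ = 1/2 * (1/‖w‖^3) := by ring
  calc ‖_ + _‖ ≤ (2/3) * ‖v‖^3 + 1/2 * (1/‖w‖^3) := le_trans (norm_add_le _ _) (by gcongr)
    _ = (2/3 + 1/2) * (1/‖w‖^3) := by rw [hvval]; ring
    _ ≤ 2 * (1/‖w‖^3) := by gcongr; norm_num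
    _ ≤ 2 / w.re ^ 3 := by
        rw [mul_one_div]
        have h3 : w.re^3 ≤ ‖w‖^3 := pow_le_pow_left₀ hw'.le norm_ge_re 3
        exact div_le_div_of_nonneg_left (by norm_num) (pow_pos hw' 3) h3

end GammaShiftAux

namespace GammaShiftAux

lemma cfun_diff_bound {X B : ℝ} (hX : 2 ≤ X) :
    ‖cfun ((X:ℂ) + Complex.I * B) - cfun (X:ℂ)‖ ≤ 2 * |B| / X^3 := by
  set c : ℂ := Complex.I * B with hc
  have hre : ∀ t : ℝ, ((X:ℂ) + t • c).re = X := by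
    intro t
    simp [hc, Complex.add_re, Complex.smul_re, Complex.mul_re]
  have hnc : ‖c‖ = |B| := by
    simp [hc, map_mul]
  have hX0 : (0:ℝ) < X := by linarith
  have key := Convex.norm_image_sub_le_of_norm_hasDerivWithin_le
    (f := fun t : ℝ => cfun ((X:ℂ) + t • c))
    (f' := fun t : ℝ => c • cderiv ((X:ℂ) + t • c)) (C := 2*|B|/X^3)
    (s := Set.Icc (0:ℝ) 1)
    (fun t _ => by
      have hw : 0 < ((X:ℂ) + t • c).re := by rw [hre]; linarith
      have h1 : HasDerivAt (fun s : ℝ => (X:ℂ) + s • c) c t := by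
        simpa using ((hasDerivAt_id t).smul_const c).const_add (X:ℂ)
      exact ((hasDerivAt_cfun hw).scomp t h1).hasDerivWithinAt)
    (fun t _ => by
      rw [norm_smul, hnc]
      have hb := cderiv_bound (w := (X:ℂ) + t • c) (by rw [hre]; exact hX)
      calc |B| * ‖cderiv ((X:ℂ) + t • c)‖ ≤ |B| * (2 / ((X:ℂ) + t • c).re^3) := by
            gcongr
        _ = 2*|B|/X^3 := by rw [hre]; ring)
    (convex_Icc 0 1) (Set.left_mem_Icc.2 zero_le_one) (Set.right_mem_Icc.2 zero_le_one)
  simpa using key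

lemma sum_log_eq (w : ℂ) (m : ℕ) :
    ∑ j ∈ Finset.range m, Complex.log (w + j) =
      hfun (w + m) - hfun w - ∑ j ∈ Finset.range m, cfun (w + j) := by
  induction m with
  | zero => simp
  | succ m ih =>
    rw [Finset.sum_range_succ, Finset.sum_range_succ, ih]
    have htel := tel (w + m)
    push_cast
    have h3 : hfun (w + ((m:ℂ) + 1)) = hfun (w + (m:ℂ) + 1) := by rw [add_assoc]
    linear_combination -htel - h3

end GammaShiftAux

namespace GammaShiftAux

lemma prod_eq_exp_sum {w : ℂ} (hw : 0 < w.re) (m : ℕ) :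
    ∏ j ∈ Finset.range (m+1), (w + (j:ℂ)) =
      Complex.exp (∑ j ∈ Finset.range (m+1), Complex.log (w + (j:ℂ))) := by
  rw [Complex.exp_sum]
  refine Finset.prod_congr rfl fun j _ => ?_
  rw [Complex.exp_log]
  apply re_pos_ne_zero
  simp only [Complex.add_re, Complex.natCast_re]
  positivity

lemma gammaSeq_eq {s : ℂ} (hs : 0 < s.re) {m : ℕ} (hm : 1 ≤ m) :
    Complex.GammaSeq s m =
      Complex.exp ((Real.log m : ℂ) * s - ∑ j ∈ Finset.range (m+1), Complex.log (s + j)) *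
        (Nat.factorial m : ℂ) := by
  have hm0 : (m:ℂ) ≠ 0 := Nat.cast_ne_zero.2 (by omega)
  rw [Complex.GammaSeq, prod_eq_exp_sum hs m, Complex.cpow_def_of_ne_zero hm0,
    ← Complex.natCast_log, Complex.exp_sub]
  ring

lemma ratio_eq {X B : ℝ} (hX : 0 < X) {m : ℕ} (hm : 1 ≤ m) :
    Complex.GammaSeq ((X:ℂ) + Complex.I * B) m / Complex.GammaSeq (X:ℂ) m =
      Complex.exp ((Complex.I * B) * (Real.log m : ℂ)
        + ∑ j ∈ Finset.range (m+1), Complex.log ((X:ℂ) + j)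
        - ∑ j ∈ Finset.range (m+1), Complex.log ((X:ℂ) + Complex.I * B + j)) := by
  have h1 : (0:ℝ) < ((X:ℂ) + Complex.I * B).re := by
    simp [Complex.add_re, Complex.mul_re]
    exact hX
  have h2 : (0:ℝ) < ((X:ℂ)).re := by simpa using hX
  rw [gammaSeq_eq h1 hm, gammaSeq_eq h2 hm,
    mul_div_mul_right _ _ (Nat.cast_ne_zero.2 (Nat.factorial_ne_zero m) : (Nat.factorial m : ℂ) ≠ 0),
    ← Complex.exp_sub]
  congr 1
  ring

end GammaShiftAux

namespace GammaShiftAux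

lemma tendsto_inv_natCast : Tendsto (fun m : ℕ => ((m:ℂ))⁻¹) atTop (𝓝 0) := by
  have h := tendsto_one_div_atTop_nhds_zero_nat (𝕜 := ℝ)
  have h2 := (Complex.continuous_ofReal.tendsto 0).comp h
  simpa [Function.comp_def, one_div] using h2

lemma tendsto_main (w : ℂ) (hw : w + 1 ≠ 0) :
    Tendsto (fun m : ℕ => (w + m + 1/2) * Complex.log (1 + (w+1)/m)) atTop (𝓝 (w+1)) := by
  have hv : Tendsto (fun m : ℕ => (w+1)/(m:ℂ)) atTop (𝓝 0) := by
    simpa [div_eq_mul_inv] using tendsto_inv_natCast.const_mul (w+1)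
  have hvne : ∀ᶠ m : ℕ in atTop, (w+1)/(m:ℂ) ≠ 0 := by
    filter_upwards [eventually_ge_atTop 1] with m hm
    exact div_ne_zero hw (Nat.cast_ne_zero.2 (by omega))
  have hslope : Tendsto (fun v : ℂ => Complex.log (1+v) / v) (𝓝[≠] (0:ℂ)) (𝓝 1) := by
    have hd : HasDerivAt (fun v : ℂ => Complex.log (1+v)) 1 0 := by
      have h1 : ((1:ℂ) + 0) ∈ Complex.slitPlane := mem_slit (by norm_num)
      have := (Complex.hasDerivAt_log h1).comp (0:ℂ) ((hasDerivAt_id (0:ℂ)).const_add 1)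
      simpa [Function.comp_def] using this
    have h2 := hasDerivAt_iff_tendsto_slope.1 hd
    have h3 : slope (fun v : ℂ => Complex.log (1+v)) 0 =
        fun v : ℂ => Complex.log (1+v) / v := by
      funext v
      rw [slope_def_field]
      simp
    rwa [h3] at h2
  have hcomp : Tendsto (fun m : ℕ => Complex.log (1 + (w+1)/m) / ((w+1)/m)) atTop (𝓝 1) := by
    refine hslope.comp (tendsto_nhdsWithin_iff.2 ⟨hv, ?_⟩)
    filter_upwards [hvne] with m hm
    simpa using hm
  have factor1 : Tendsto (fun m : ℕ => (w + m + 1/2) * ((w+1)/m)) atTop (𝓝 (w+1)) := by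
    have h1 : Tendsto (fun m : ℕ => (w+1) * ((w + 1/2) * (m:ℂ)⁻¹ + 1)) atTop
        (𝓝 ((w+1) * ((w + 1/2) * 0 + 1))) :=
      (((tendsto_inv_natCast.const_mul (w+1/2)).add_const 1).const_mul (w+1))
    have h2 : (w+1) * ((w + 1/2) * 0 + 1) = w + 1 := by ring
    rw [h2] at h1
    refine h1.congr' ?_
    filter_upwards [eventually_ge_atTop 1] with m hm
    have hm0 : (m:ℂ) ≠ 0 := Nat.cast_ne_zero.2 (by omega)
    field_simp
    ring
  have := factor1.mul hcomp
  rw [mul_one] at this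
  refine this.congr' ?_
  filter_upwards [hvne, eventually_ge_atTop 1] with m hm hm1
  have hm0 : (m:ℂ) ≠ 0 := Nat.cast_ne_zero.2 (by omega)
  field_simp

lemma log_shift (w : ℂ) (hw : w + 1 ≠ 0) :
    ∀ᶠ m : ℕ in atTop, Complex.log (w + (m:ℂ) + 1) =
      (Real.log m : ℂ) + Complex.log (1 + (w+1)/m) := by
  have hv : Tendsto (fun m : ℕ => ‖(w+1)/(m:ℂ)‖) atTop (𝓝 0) := by
    have : Tendsto (fun m : ℕ => (w+1)/(m:ℂ)) atTop (𝓝 0) := by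
      simpa [div_eq_mul_inv] using tendsto_inv_natCast.const_mul (w+1)
    simpa using this.norm
  filter_upwards [eventually_ge_atTop 1, hv.eventually (gt_mem_nhds one_pos)] with m hm1 hmlt
  have hm0 : (0:ℝ) < (m:ℝ) := by exact_mod_cast Nat.pos_of_ne_zero (by omega)
  have hmC : (m:ℂ) ≠ 0 := Nat.cast_ne_zero.2 (by omega)
  have hne : 1 + (w+1)/(m:ℂ) ≠ 0 := by
    intro h
    have h1 : (w+1)/(m:ℂ) = -1 := by linear_combination h
    rw [h1] at hmlt
    norm_num at hmlt
  have hmul := Complex.log_ofReal_mul hm0 hne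
  have harg : ((m:ℝ):ℂ) * (1 + (w+1)/(m:ℂ)) = w + (m:ℂ) + 1 := by
    push_cast
    field_simp
    ring
  rw [harg] at hmul
  rw [hmul]

lemma tendsto_A {X B : ℝ} (hX : 0 < X) :
    Tendsto (fun m : ℕ => (Complex.I * B) * (Real.log m : ℂ)
      - hfun ((X:ℂ) + Complex.I * B + m + 1) + hfun ((X:ℂ) + m + 1)) atTop (𝓝 0) := by
  set z : ℂ := (X:ℂ) + Complex.I * B with hz
  have hz1 : hfun z = hfun z := rfl
  have hzne : z + 1 ≠ 0 := by
    apply re_pos_ne_zero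
    simp [hz, Complex.add_re, Complex.mul_re]
    linarith
  have hXne : ((X:ℂ)) + 1 ≠ 0 := by
    apply re_pos_ne_zero
    simp [Complex.add_re]
    linarith
  have t1 := tendsto_main z hzne
  have t2 := tendsto_main (X:ℂ) hXne
  have tt : Tendsto (fun m : ℕ => -((z + m + 1/2) * Complex.log (1 + (z+1)/m))
      + ((X:ℂ) + m + 1/2) * Complex.log (1 + ((X:ℂ)+1)/m) + Complex.I * B) atTop
      (𝓝 (-(z+1) + ((X:ℂ)+1) + Complex.I * B)) :=
    (t1.neg.add t2).add_const _
  have hval : -(z+1) + ((X:ℂ)+1) + Complex.I * B = 0 := by rw [hz]; ring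
  rw [hval] at tt
  refine tt.congr' ?_
  filter_upwards [log_shift z hzne, log_shift (X:ℂ) hXne] with m e1 e2
  simp only [hfun]
  rw [show z + (m:ℂ) + 1 - 1/2 = z + m + 1/2 from by ring,
    show (X:ℂ) + (m:ℂ) + 1 - 1/2 = (X:ℂ) + m + 1/2 from by ring] at *
  rw [e1, e2, hz]
  ring

end GammaShiftAux

namespace GammaShiftAux

lemma sum3_bound {X : ℝ} (hX : 2 ≤ X) :
    Summable (fun j : ℕ => 1/(X+(j:ℝ))^3) ∧ (∑' j : ℕ, 1/(X+(j:ℝ))^3) ≤ 2/X^2 := by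
  have hX0 : (0:ℝ) < X := by linarith
  have hpos : ∀ j : ℕ, (0:ℝ) < X + j := fun j => by positivity
  have hsum : Summable (fun j : ℕ => 1/(X+(j:ℝ))^3) := by
    have h1 : Summable (fun j : ℕ => 1/((j:ℝ)+1)^3) := by
      have h2 : Summable (fun n : ℕ => 1/(n:ℝ)^3) :=
        Real.summable_one_div_nat_pow.2 (by norm_num)
      have h3 := (summable_nat_add_iff 1).2 h2
      refine h3.congr fun j => ?_
      push_cast
      ring
    refine Summable.of_nonneg_of_le (fun j => by positivity) (fun j => ?_) h1
    apply one_div_le_one_div_of_le (by positivity)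
    have hj : (0:ℝ) ≤ (j:ℝ) := Nat.cast_nonneg j
    have : (j:ℝ) + 1 ≤ X + j := by linarith
    exact pow_le_pow_left₀ (by positivity) this 3
  refine ⟨hsum, ?_⟩
  apply hsum.tsum_le_of_sum_le
  intro s
  obtain ⟨n, hn⟩ := s.exists_nat_subset_range
  calc ∑ j ∈ s, 1/(X+(j:ℝ))^3
      ≤ ∑ j ∈ Finset.range n, 1/(X+(j:ℝ))^3 := by
        apply Finset.sum_le_sum_of_subset_of_nonneg hn
        intro j _ _
        positivity
    _ ≤ ∑ j ∈ Finset.range n, (1/X) * (1/(X-1+j) - 1/(X-1+(j+1))) := by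
        apply Finset.sum_le_sum
        intro j _
        have hj : (0:ℝ) ≤ (j:ℝ) := Nat.cast_nonneg j
        have h1 : (0:ℝ) < X - 1 + j := by linarith
        have h2 : (0:ℝ) < X - 1 + ((j:ℝ)+1) := by linarith
        have e : (1:ℝ)/(X-1+j) - 1/(X-1+(j+1)) = 1/((X-1+j)*(X+j)) := by
          rw [div_sub_div _ _ (ne_of_gt h1) (ne_of_gt h2)]
          rw [show X - 1 + ((j:ℝ)+1) = X + j from by ring]
          congr 1
          ring
        rw [e, mul_one_div, div_div]
        apply one_div_le_one_div_of_le (by positivity)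
        have hstep : (X+(j:ℝ))^3 = X*((X-1+j)*(X+j)) + (X+j)*(X*j + j^2 + X) := by ring
        nlinarith [hpos j, mul_nonneg (hpos j).le (by positivity : (0:ℝ) ≤ X*j + j^2 + X)]
    _ = (1/X) * ∑ j ∈ Finset.range n, ((fun i : ℕ => 1/(X-1+(i:ℝ))) j
          - (fun i : ℕ => 1/(X-1+(i:ℝ))) (j+1)) := by
        rw [Finset.mul_sum]
        apply Finset.sum_congr rfl
        intro j _
        push_cast
        ring
    _ ≤ 2/X^2 := by
        rw [Finset.sum_range_sub' (fun i : ℕ => 1/(X-1+(i:ℝ)))]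
        have h1 : (0:ℝ) < X - 1 := by linarith
        have h2 : (0:ℝ) < X - 1 + n := by
          have : (0:ℝ) ≤ (n:ℝ) := Nat.cast_nonneg n
          linarith
        have h3 : 1/(X-1+(0:ℕ):ℝ) - 1/(X-1+(n:ℝ)) ≤ 1/(X-1) := by
          push_cast
          have : (0:ℝ) ≤ 1/(X-1+(n:ℝ)) := by positivity
          simp only [add_zero]
          linarith
        calc (1/X) * (1/(X-1+((0:ℕ):ℝ)) - 1/(X-1+(n:ℝ))) ≤ (1/X) * (1/(X-1)) := by
              apply mul_le_mul_of_nonneg_left _ (by positivity)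
              exact_mod_cast h3
          _ ≤ (1/X) * (2/X) := by
              apply mul_le_mul_of_nonneg_left _ (by positivity)
              rw [div_le_div_iff₀ h1 hX0]
              linarith
          _ = 2/X^2 := by ring

lemma key {X B : ℝ} (hX : 2 ≤ X) (hB : |B| ≤ X/2) :
    ∃ r : ℂ, ‖r‖ ≤ 8 * (|B| + B^2) / X^2 ∧
      Complex.Gamma ((X:ℂ) + Complex.I * B) / Complex.Gamma (X:ℂ) =
        Complex.exp (((X:ℂ) + Complex.I * B) * Complex.log ((X:ℂ) + Complex.I * B)
          - (X:ℂ) * (Real.log X : ℂ) - Complex.I * B - Complex.I * B / (2*(X:ℂ)) + r) := by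
  have hX0 : (0:ℝ) < X := by linarith
  set z : ℂ := (X:ℂ) + Complex.I * B with hzdef
  set F : ℕ → ℂ := fun j => cfun (z + j) - cfun ((X:ℂ) + j) with hFdef
  obtain ⟨hsum3, htsum3⟩ := sum3_bound hX
  have hFnorm : ∀ j : ℕ, ‖F j‖ ≤ 2*|B| * (1/(X+(j:ℝ))^3) := by
    intro j
    have hj : (0:ℝ) ≤ (j:ℝ) := Nat.cast_nonneg j
    have h2j : 2 ≤ X + (j:ℝ) := by linarith
    have hd := cfun_diff_bound (X := X + (j:ℝ)) (B := B) h2j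
    have e1 : (((X + (j:ℝ)) : ℝ):ℂ) + Complex.I * B = z + j := by
      rw [hzdef]; push_cast; ring
    have e2 : (((X + (j:ℝ)) : ℝ):ℂ) = (X:ℂ) + j := by push_cast; ring
    rw [e1, e2] at hd
    calc ‖F j‖ = ‖cfun (z + j) - cfun ((X:ℂ) + j)‖ := rfl
      _ ≤ 2*|B|/(X+(j:ℝ))^3 := hd
      _ = 2*|B| * (1/(X+(j:ℝ))^3) := by ring
  have hFsummable : Summable F :=
    Summable.of_norm_bounded (hsum3.mul_left (2*|B|)) hFnorm
  set T : ℂ := ∑' j : ℕ, F j with hTdef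
  have hTnorm : ‖T‖ ≤ 4*|B|/X^2 := by
    calc ‖T‖ ≤ ∑' j : ℕ, ‖F j‖ := norm_tsum_le_tsum_norm (hFsummable.norm)
      _ ≤ ∑' j : ℕ, 2*|B| * (1/(X+(j:ℝ))^3) :=
          hFsummable.norm.tsum_le_tsum hFnorm (hsum3.mul_left (2*|B|))
      _ = 2*|B| * ∑' j : ℕ, 1/(X+(j:ℝ))^3 := by rw [tsum_mul_left]
      _ ≤ 2*|B| * (2/X^2) := by
          apply mul_le_mul_of_nonneg_left htsum3 (by positivity)
      _ = 4*|B|/X^2 := by ring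
  -- the limit identity
  set S : ℂ := hfun z - hfun (X:ℂ) + T with hSdef
  have hGamma : Complex.Gamma z / Complex.Gamma (X:ℂ) = Complex.exp S := by
    have hGX : Complex.Gamma (X:ℂ) ≠ 0 := by
      apply Complex.Gamma_ne_zero_of_re_pos
      simpa using hX0
    have hratio : Tendsto (fun m : ℕ => Complex.GammaSeq z m / Complex.GammaSeq (X:ℂ) m)
        atTop (𝓝 (Complex.Gamma z / Complex.Gamma (X:ℂ))) :=
      (Complex.GammaSeq_tendsto_Gamma z).div (Complex.GammaSeq_tendsto_Gamma (X:ℂ)) hGX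
    have hEtendsto : Tendsto (fun m : ℕ => (Complex.I * B) * (Real.log m : ℂ)
        - hfun (z + m + 1) + hfun ((X:ℂ) + m + 1) + (hfun z - hfun (X:ℂ))
        + ∑ j ∈ Finset.range (m+1), F j) atTop (𝓝 S) := by
      have hA := tendsto_A (X := X) (B := B) hX0
      have hpart : Tendsto (fun m : ℕ => ∑ j ∈ Finset.range (m+1), F j) atTop (𝓝 T) := by
        have h1 := hFsummable.hasSum.tendsto_sum_nat
        exact h1.comp (tendsto_add_atTop_nat 1)
      have := (hA.add_const (hfun z - hfun (X:ℂ))).add hpart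
      rw [zero_add] at this
      convert this using 2
    have hexpE : Tendsto (fun m : ℕ => Complex.GammaSeq z m / Complex.GammaSeq (X:ℂ) m)
        atTop (𝓝 (Complex.exp S)) := by
      have h2 := hEtendsto.cexp
      refine Tendsto.congr' ?_ h2
      filter_upwards [eventually_ge_atTop 1] with m hm
      rw [ratio_eq (X := X) (B := B) hX0 hm]
      congr 1
      have hs1 := sum_log_eq ((X:ℂ)) (m+1)
      have hs2 := sum_log_eq z (m+1)
      have hc1 : hfun ((X:ℂ) + ((m+1:ℕ):ℂ)) = hfun ((X:ℂ) + m + 1) := by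
        have h : ((X:ℂ) + ((m+1:ℕ):ℂ)) = (X:ℂ) + m + 1 := by push_cast; try ring
        rw [h]
      have hc2 : hfun (z + ((m+1:ℕ):ℂ)) = hfun (z + m + 1) := by
        have h : (z + ((m+1:ℕ):ℂ)) = z + m + 1 := by push_cast; try ring
        rw [h]
      rw [hc1] at hs1
      rw [hc2] at hs2
      have hsplit : ∑ j ∈ Finset.range (m+1), F j =
          (∑ j ∈ Finset.range (m+1), cfun (z + j))
            - ∑ j ∈ Finset.range (m+1), cfun ((X:ℂ) + j) := by
        rw [hFdef, Finset.sum_sub_distrib]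
      rw [hzdef] at hs2 hsplit ⊢
      linear_combination hs2 - hs1 + hsplit
    exact tendsto_nhds_unique hratio hexpE
  -- now define r and bound it
  set M : ℂ := ((X:ℂ) + Complex.I * B) * Complex.log ((X:ℂ) + Complex.I * B)
      - (X:ℂ) * (Real.log X : ℂ) - Complex.I * B - Complex.I * B / (2*(X:ℂ)) with hMdef
  refine ⟨S - M, ?_, ?_⟩
  · -- the bound
    set u : ℂ := Complex.I * B / X with hudef
    have hXC : ((X:ℂ)) ≠ 0 := by exact_mod_cast ne_of_gt hX0
    have hnu : ‖u‖ = |B|/X := by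
      rw [hudef]
      rw [norm_div, norm_mul]
      simp [abs_of_pos hX0]
    have hnu2 : ‖u‖ ≤ 1/2 := by
      rw [hnu, div_le_div_iff₀ hX0 (by norm_num)]
      linarith
    have hlogz : Complex.log z = (Real.log X : ℂ) + Complex.log (1 + u) := by
      have hne : 1 + u ≠ 0 := by
        intro h
        have : ‖u‖ = 1 := by
          have h1 : u = -1 := by linear_combination h
          rw [h1]; norm_num
        rw [this] at hnu2; norm_num at hnu2
      have := Complex.log_ofReal_mul hX0 hne
      have harg : ((X:ℝ):ℂ) * (1 + u) = z := by
        rw [hudef, hzdef]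
        field_simp
      rw [harg] at this
      exact this
    have hpart1 : hfun z - hfun (X:ℂ) - M = -(1/2) * (Complex.log (1+u) - u) := by
      have hlogX : Complex.log ((X:ℂ)) = (Real.log X : ℂ) := (Complex.ofReal_log hX0.le).symm
      simp only [hfun, hMdef]
      rw [← hzdef, hlogz, hlogX]
      have hu2 : Complex.I * (B:ℂ) / (2*(X:ℂ)) = u/2 := by
        rw [hudef, div_div, mul_comm (2:ℂ) (X:ℂ)]
      rw [hu2, hzdef]
      have huz : Complex.I * (B:ℂ) = u * X := by
        rw [hudef, div_mul_cancel₀ _ hXC]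
      rw [huz]
      ring
    have hbound1 : ‖hfun z - hfun (X:ℂ) - M‖ ≤ B^2/(2*X^2) := by
      rw [hpart1]
      rw [norm_mul]
      have h1 : ‖Complex.log (1+u) - u‖ ≤ ‖u‖^2 := by
        have := Complex.norm_log_one_add_sub_self_le (lt_of_le_of_lt hnu2 (by norm_num))
        have h2 : (1 - ‖u‖)⁻¹ ≤ 2 := by
          rw [inv_le_iff_one_le_mul₀ (by linarith)]
          linarith
        calc ‖Complex.log (1+u) - u‖ ≤ ‖u‖^2 * (1-‖u‖)⁻¹/2 := this
          _ ≤ ‖u‖^2 * 2/2 := by gcongr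
          _ = ‖u‖^2 := by ring
      calc ‖(-(1/2):ℂ)‖ * ‖Complex.log (1+u) - u‖ ≤ (1/2) * ‖u‖^2 := by
            rw [show ‖(-(1/2):ℂ)‖ = 1/2 from by norm_num]
            gcongr
        _ = B^2/(2*X^2) := by
            rw [hnu, div_pow, _root_.sq_abs]
            ring
    have : ‖S - M‖ ≤ B^2/(2*X^2) + 4*|B|/X^2 := by
      have hSM : S - M = (hfun z - hfun (X:ℂ) - M) + T := by rw [hSdef]; ring
      rw [hSM]
      calc ‖_ + T‖ ≤ ‖hfun z - hfun (X:ℂ) - M‖ + ‖T‖ := norm_add_le _ _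
        _ ≤ B^2/(2*X^2) + 4*|B|/X^2 := add_le_add hbound1 hTnorm
    calc ‖S - M‖ ≤ B^2/(2*X^2) + 4*|B|/X^2 := this
      _ ≤ 8 * (|B| + B^2) / X^2 := by
          rw [div_add_div _ _ (by positivity : (2*X^2:ℝ) ≠ 0) (by positivity : (X^2:ℝ) ≠ 0)]
          rw [div_le_div_iff₀ (by positivity) (by positivity)]
          nlinarith [mul_nonneg (abs_nonneg B) (pow_nonneg hX0.le 4),
            mul_nonneg (sq_nonneg B) (pow_nonneg hX0.le 4)]
  · rw [hGamma]
    congr 1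
    ring

end GammaShiftAux

/-- Asymptotic expansion of `Γ(x + ib)/Γ(x)` for real `x → ∞` and real `b = o(x)`. -/
theorem gamma_ratio_imaginary_shift_expansion
    (x : ℕ → ℝ) (hx0 : ∀ n, 0 < x n)
    (hxInf : Tendsto x atTop atTop)
    (b : ℕ → ℝ)
    (hbx : Tendsto (fun n => b n / x n) atTop (nhds 0)) :
    ∃ C > (0 : ℝ), ∃ N : ℕ, ∀ n ≥ N, ∃ r : ℂ,
      ‖r‖ ≤ C * (|b n| + (b n) ^ 2) / (x n) ^ 2 ∧
      Complex.Gamma ((x n : ℂ) + Complex.I * (b n : ℂ)) / Complex.Gamma ((x n : ℂ)) =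
        Complex.exp (((x n : ℂ) + Complex.I * (b n : ℂ)) *
            Complex.log ((x n : ℂ) + Complex.I * (b n : ℂ)) -
          (x n : ℂ) * (Real.log (x n) : ℂ) - Complex.I * (b n : ℂ) -
          Complex.I * (b n : ℂ) / (2 * (x n : ℂ)) + r) := by
  refine ⟨8, by norm_num, ?_⟩
  have h1 : ∀ᶠ n in atTop, 2 ≤ x n := hxInf.eventually (eventually_ge_atTop 2)
  have h2 : ∀ᶠ n in atTop, |b n / x n| < 1/2 := by
    have h3 := hbx.abs
    rw [abs_zero] at h3
    exact h3.eventually (gt_mem_nhds (by norm_num))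
  obtain ⟨N, hN⟩ := eventually_atTop.1 (h1.and h2)
  refine ⟨N, fun n hn => ?_⟩
  obtain ⟨hxn, hbn⟩ := hN n hn
  have hx0' : 0 < x n := hx0 n
  have hb2 : |b n| ≤ x n / 2 := by
    rw [abs_div, abs_of_pos hx0'] at hbn
    have := (div_lt_iff₀ hx0').1 hbn
    linarith
  obtain ⟨r, hr, heq⟩ := GammaShiftAux.key hxn hb2
  exact ⟨r, hr, heq⟩

end
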